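/- Let W be a vector space over an infinite field K with dim(W) ≥ 2^|K|, and let κ be a cardinal with 2 ≤ κ ≤ |W|. Then there exists a star-like subset F ⊊ W containing 0 such that A(F,W) = κ and mL(F) = dim(W) (so that L(F) = dim(W)⁺). -/

import Mathlib

open Cardinal

universe u

/-- The additivity number `A(M,W)`: the least element of
`{|F| : F ⊆ W ∧ ∀ w ∈ W, w + F ⊄ M} ∪ {|W|⁺}`. -/
noncomputable def addNum {W : Type u} [AddCommGroup W] (M : Set W) : Cardinal.{u} :=
  sInf ({κ | ∃ F : Set W, #F = κ ∧ ∀ w : W, ¬ ((fun f => w + f) '' F ⊆ M)} ∪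
    {Order.succ #W})

/-- `V` is a maximal linear subspace contained in `M ∪ {0}`. -/
def IsMaxSubspace (K : Type u) {W : Type u} [Field K] [AddCommGroup W] [Module K W]
    (M : Set W) (V : Submodule K W) : Prop :=
  (V : Set W) ⊆ M ∪ {0} ∧ ∀ V' : Submodule K W, V < V' → ¬ ((V' : Set W) ⊆ M ∪ {0})

/-- The maximal lineability number `mL(M)`: the minimum of the dimensions of the
maximal linear subspaces of `M ∪ {0}`. -/
noncomputable def mL (K : Type u) {W : Type u} [Field K] [AddCommGroup W] [Module K W]
    (M : Set W) : Cardinal.{u} :=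
  sInf {κ | ∃ V : Submodule K W, IsMaxSubspace K M V ∧ Module.rank K V = κ}

/-- The lineability number `L(M)`: the least cardinal `κ` such that `M ∪ {0}` contains
no linear subspace of dimension `κ`. -/
noncomputable def linNum (K : Type u) {W : Type u} [Field K] [AddCommGroup W] [Module K W]
    (M : Set W) : Cardinal.{u} :=
  sInf {κ | ¬ ∃ V : Submodule K W, (V : Set W) ⊆ M ∪ {0} ∧ Module.rank K V = κ}

/-- The star of `M`: the set of `w` such that `c • w ∈ M` for every nonzero scalar `c`. -/
def starSet (K : Type u) {W : Type u} [Field K] [AddCommGroup W] [Module K W]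
    (M : Set W) : Set W :=
  {w | ∀ c : K, c ≠ 0 → c • w ∈ M}

/-- `M` is star-like provided `st(M) = M`. -/
def StarLike (K : Type u) {W : Type u} [Field K] [AddCommGroup W] [Module K W]
    (M : Set W) : Prop :=
  starSet K M = M

section Helpers

variable {K W : Type u} [Field K] [AddCommGroup W] [Module K W]

lemma starLike_of_invariant {M : Set W}
    (hinv : ∀ c : K, c ≠ 0 → ∀ x ∈ M, c • x ∈ M) : StarLike K M := by
  ext x
  constructor
  · intro hx
    simpa using hx 1 one_ne_zero
  · intro hx c hc
    exact hinv c hc x hx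

lemma exists_submodule_rank_eq (M₀ : Submodule K W) (c : Cardinal.{u})
    (hc : c ≤ Module.rank K M₀) :
    ∃ V : Submodule K W, (V : Set W) ⊆ (M₀ : Set W) ∧ Module.rank K V = c := by
  let B := Module.Basis.ofVectorSpace K M₀
  have hB : #(Module.Basis.ofVectorSpaceIndex K M₀) = Module.rank K M₀ := B.mk_eq_rank''
  obtain ⟨s, hs⟩ := Cardinal.le_mk_iff_exists_set.1 (hc.trans_eq hB.symm)
  let v : s → W := fun i => (B i.1 : W)
  have hvind : LinearIndependent K v := by
    have h1 : LinearIndependent K (fun i : s => B i.1) :=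
      B.linearIndependent.comp _ Subtype.val_injective
    exact h1.map' M₀.subtype (Submodule.ker_subtype M₀)
  have hvinj : Function.Injective v := by
    intro a b hab
    have : B a.1 = B b.1 := Subtype.val_injective hab
    exact Subtype.val_injective (B.injective this)
  refine ⟨Submodule.span K (Set.range v), ?_, ?_⟩
  · have : Submodule.span K (Set.range v) ≤ M₀ := by
      rw [Submodule.span_le]
      rintro _ ⟨i, rfl⟩
      exact (B i.1 : M₀).2
    exact this
  · rw [rank_span hvind, mk_range_eq v hvinj, hs]

lemma exists_good_quotient {V' : Type u} [AddCommGroup V'] [Module K V']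
    (hinf : ℵ₀ ≤ Module.rank K W) (hle : Module.rank K V' ≤ Module.rank K W) :
    ∃ q : W →ₗ[K] V', Function.Surjective q ∧
      Module.rank K (LinearMap.ker q) = Module.rank K W := by
  let BW := Module.Basis.ofVectorSpace K W
  let BV := Module.Basis.ofVectorSpace K V'
  set ιW := Module.Basis.ofVectorSpaceIndex K W
  set ιV := Module.Basis.ofVectorSpaceIndex K V'
  have hW : #ιW = Module.rank K W := BW.mk_eq_rank''
  have hV : #ιV = Module.rank K V' := BV.mk_eq_rank''
  have hcard : #(ιV ⊕ ιW) = #ιW := by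
    rw [Cardinal.mk_sum, Cardinal.lift_id, Cardinal.lift_id]
    exact Cardinal.add_eq_right (hW ▸ hinf) (by rw [hW, hV]; exact hle)
  obtain ⟨e⟩ : Nonempty ((ιW : Set W) ≃ ((ιV : Set V') ⊕ (ιW : Set W))) := Cardinal.eq.1 hcard.symm
  let B' := BW.reindex e
  let q : W →ₗ[K] V' := B'.constr K (Sum.elim (fun j => BV j) (fun _ => 0))
  have hq1 : ∀ j : ιV, q (B' (Sum.inl j)) = BV j := fun j => B'.constr_basis K _ _
  have hq2 : ∀ i : ιW, q (B' (Sum.inr i)) = 0 := fun i => B'.constr_basis K _ _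
  refine ⟨q, ?_, ?_⟩
  · rw [← LinearMap.range_eq_top]
    apply top_unique
    rw [← BV.span_eq]
    rw [Submodule.span_le]
    rintro _ ⟨j, rfl⟩
    exact ⟨B' (Sum.inl j), hq1 j⟩
  · apply le_antisymm ((LinearMap.ker q).rank_le)
    have hind : LinearIndependent K (fun i : ιW => B' (Sum.inr i)) :=
      B'.linearIndependent.comp _ Sum.inr_injective
    have hspan : Submodule.span K (Set.range (fun i : ιW => B' (Sum.inr i))) ≤
        LinearMap.ker q := by
      rw [Submodule.span_le]
      rintro _ ⟨i, rfl⟩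
      exact hq2 i
    calc Module.rank K W = #ιW := hW.symm
      _ = Module.rank K (Submodule.span K (Set.range (fun i : ιW => B' (Sum.inr i)))) := by
          rw [rank_span hind]
          exact (mk_range_eq _ (fun a b h => Sum.inr_injective (B'.injective h))).symm
      _ ≤ Module.rank K (LinearMap.ker q) := Submodule.rank_mono hspan

end Helpers
section Reduction

variable {K W V' : Type u} [Field K] [AddCommGroup W] [Module K W]
  [AddCommGroup V'] [Module K V']

lemma main_reduction (q : W →ₗ[K] V') (hq : Function.Surjective q)
    (hker : Module.rank K (LinearMap.ker q) = Module.rank K W)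
    (F' : Set V') (h0 : (0 : V') ∈ F')
    (hinv : ∀ c : K, c ≠ 0 → ∀ x ∈ F', c • x ∈ F')
    (φ : V' →ₗ[K] K) (hφ : Function.Surjective φ)
    (hφker : (LinearMap.ker φ : Set V') ⊆ F')
    (bad : V') (hbad : bad ∉ F')
    (κ : Cardinal.{u}) (hκW : κ ≤ #W)
    (hi : ∀ S : Set V', #S < κ → ∃ w : V', ∀ s ∈ S, w + s ∈ F')
    (hii : ∃ S0 : Set V', #S0 = κ ∧ ∀ w : V', ∃ s ∈ S0, w + s ∉ F') :
    ∃ F : Set W, F ≠ Set.univ ∧ (0 : W) ∈ F ∧ StarLike K F ∧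
      addNum F = κ ∧ mL K F = Module.rank K W ∧
      linNum K F = Order.succ (Module.rank K W) := by
  classical
  have hbad0 : bad ≠ 0 := fun h => hbad (h ▸ h0)
  set F : Set W := q ⁻¹' F' with hF
  have hF0 : (0 : W) ∈ F := by simp only [hF, Set.mem_preimage, map_zero]; exact h0
  have hFcup : F ∪ {0} = F :=
    Set.union_eq_self_of_subset_right (Set.singleton_subset_iff.2 hF0)
  obtain ⟨wb, hwb⟩ := hq bad
  have hwbF : wb ∉ F := by simp only [hF, Set.mem_preimage, hwb]; exact hbad
  have hwb0 : wb ≠ 0 := fun h => hbad0 (by rw [← hwb, h, map_zero])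
  refine ⟨F, ?_, hF0, ?_, ?_, ?_, ?_⟩
  · intro h
    exact hwbF (h ▸ Set.mem_univ wb)
  · -- star-like
    apply starLike_of_invariant
    intro c hc x hx
    have : q (c • x) = c • q x := map_smul q c x
    simp only [hF, Set.mem_preimage, this]
    exact hinv c hc _ hx
  · -- addNum
    have hmem : κ ∈ ({κ | ∃ Fs : Set W, #Fs = κ ∧
        ∀ w : W, ¬ ((fun f => w + f) '' Fs ⊆ F)} ∪ {Order.succ #W}) := by
      left
      obtain ⟨S0, hS0card, hS0⟩ := hii
      let g := Function.surjInv hq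
      have hginj : Function.Injective g := by
        intro a b hab
        have : q (g a) = q (g b) := by rw [hab]
        rwa [Function.surjInv_eq hq, Function.surjInv_eq hq] at this
      refine ⟨g '' S0, by rw [Cardinal.mk_image_eq hginj, hS0card], ?_⟩
      intro w hsub
      obtain ⟨s, hsS0, hs⟩ := hS0 (q w)
      apply hs
      have hmem2 : w + g s ∈ F := hsub ⟨g s, Set.mem_image_of_mem g hsS0, rfl⟩
      have : q (w + g s) = q w + s := by rw [map_add, Function.surjInv_eq hq]
      rwa [hF, Set.mem_preimage, this] at hmem2
    have hlb : ∀ x ∈ ({κ | ∃ Fs : Set W, #Fs = κ ∧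
        ∀ w : W, ¬ ((fun f => w + f) '' Fs ⊆ F)} ∪ {Order.succ #W}), κ ≤ x := by
      rintro x (⟨Fs, hFscard, hFs⟩ | hx)
      · by_contra hlt
        push_neg at hlt
        rw [← hFscard] at hlt
        obtain ⟨w', hw'⟩ := hi (q '' Fs) (lt_of_le_of_lt Cardinal.mk_image_le hlt)
        obtain ⟨w, rfl⟩ := hq w'
        apply hFs w
        rintro y ⟨f, hf, rfl⟩
        have : q (w + f) = q w + q f := map_add q w f
        rw [hF, Set.mem_preimage, this]
        exact hw' (q f) (Set.mem_image_of_mem _ hf)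
      · rw [Set.mem_singleton_iff] at hx
        subst hx
        exact hκW.trans (Order.le_succ _)
    exact le_antisymm (csInf_le' hmem) (le_csInf ⟨_, hmem⟩ hlb)
  · -- mL
    set ψ : W →ₗ[K] K := φ.comp q with hψ
    have hψsurj : Function.Surjective ψ := hφ.comp hq
    set M₀ : Submodule K W := LinearMap.ker ψ with hM₀
    have hM₀F : (M₀ : Set W) ⊆ F := by
      intro x hx
      have hx' : φ (q x) = 0 := hx
      exact hφker hx'
    have hkerle : LinearMap.ker q ≤ M₀ := by
      intro x hx
      have hx' : q x = 0 := hx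
      show φ (q x) = 0
      rw [hx', map_zero]
    have hM₀rank : Module.rank K M₀ = Module.rank K W :=
      le_antisymm M₀.rank_le (hker ▸ Submodule.rank_mono hkerle)
    have hM₀max : IsMaxSubspace K F M₀ := by
      constructor
      · exact hM₀F.trans Set.subset_union_left
      · intro V₀ hlt hsub
        obtain ⟨-, x, hxV₀, hxM₀⟩ := SetLike.lt_iff_le_and_exists.1 hlt
        have hψx : ψ x ≠ 0 := hxM₀
        have htop : V₀ = ⊤ := by
          rw [eq_top_iff]
          intro y _
          have h1 : y - (ψ y / ψ x) • x ∈ M₀ := by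
            show ψ _ = 0
            rw [map_sub, map_smul, smul_eq_mul, div_mul_cancel₀ _ hψx, sub_self]
          have h2 : y - (ψ y / ψ x) • x ∈ V₀ := hlt.le h1
          have := V₀.add_mem h2 (V₀.smul_mem (ψ y / ψ x) hxV₀)
          simpa using this
        rw [htop] at hsub
        have := hsub (Set.mem_univ wb)
        rw [hFcup] at this
        exact hwbF this
    have huniq : ∀ V₀ : Submodule K W, IsMaxSubspace K F V₀ →
        Module.rank K V₀ = Module.rank K W := by
      rintro V₀ ⟨hsub, hmax⟩
      have hkerle' : LinearMap.ker q ≤ V₀ := by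
        by_contra hn
        apply hmax (V₀ ⊔ LinearMap.ker q) (left_lt_sup.2 hn)
        intro x hx
        obtain ⟨y, hy, z, hz, rfl⟩ := Submodule.mem_sup.1 hx
        have hz' : q z = 0 := hz
        have hqx : q (y + z) = q y := by rw [map_add, hz', add_zero]
        rcases hsub hy with hyF | hy0
        · left
          rw [hF, Set.mem_preimage, hqx]
          exact hyF
        · left
          rw [Set.mem_singleton_iff] at hy0
          rw [hF, Set.mem_preimage, hqx, hy0, map_zero]
          exact h0
      exact le_antisymm V₀.rank_le (hker ▸ Submodule.rank_mono hkerle')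
    have hset : {c | ∃ V : Submodule K W, IsMaxSubspace K F V ∧ Module.rank K V = c}
        = {Module.rank K W} := by
      ext c
      constructor
      · rintro ⟨V₀, hmax, rfl⟩
        exact huniq V₀ hmax
      · rintro rfl
        exact ⟨M₀, hM₀max, hM₀rank⟩
    rw [mL, hset, csInf_singleton]
  · -- linNum
    set ψ : W →ₗ[K] K := φ.comp q with hψ
    set M₀ : Submodule K W := LinearMap.ker ψ with hM₀
    have hM₀F : (M₀ : Set W) ⊆ F := by
      intro x hx
      have hx' : φ (q x) = 0 := hx
      exact hφker hx'
    have hkerle : LinearMap.ker q ≤ M₀ := by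
      intro x hx
      have hx' : q x = 0 := hx
      show φ (q x) = 0
      rw [hx', map_zero]
    have hM₀rank : Module.rank K M₀ = Module.rank K W :=
      le_antisymm M₀.rank_le (hker ▸ Submodule.rank_mono hkerle)
    have hexists : ∀ c : Cardinal.{u}, c ≤ Module.rank K W →
        ∃ V : Submodule K W, (V : Set W) ⊆ F ∪ {0} ∧ Module.rank K V = c := by
      intro c hc
      obtain ⟨V, hVsub, hVrank⟩ := exists_submodule_rank_eq M₀ c (hM₀rank ▸ hc)
      exact ⟨V, (hVsub.trans hM₀F).trans Set.subset_union_left, hVrank⟩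
    have hmemU : Order.succ (Module.rank K W) ∈
        {c | ¬ ∃ V : Submodule K W, (V : Set W) ⊆ F ∪ {0} ∧ Module.rank K V = c} := by
      rintro ⟨V, -, hVrank⟩
      have h1 : Module.rank K V ≤ Module.rank K W := V.rank_le
      rw [hVrank] at h1
      exact (Order.lt_succ (Module.rank K W)).not_ge h1
    have hlb : ∀ x ∈ {c | ¬ ∃ V : Submodule K W,
        (V : Set W) ⊆ F ∪ {0} ∧ Module.rank K V = c}, Order.succ (Module.rank K W) ≤ x := by
      intro x hx
      by_contra hn
      push_neg at hn
      rw [Order.lt_succ_iff] at hn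
      exact hx (hexists x hn)
    exact le_antisymm (csInf_le' hmemU) (le_csInf ⟨_, hmemU⟩ hlb)

end Reduction
section ConstructionA

variable {K : Type u} [Field K]

/-- The subspace of `ι → K` of functions which are constant off a set of size `< max ℵ₀ κ`. -/
def Vsub (K : Type u) [Field K] (ι : Type u) (κ : Cardinal.{u}) : Submodule K (ι → K) where
  carrier := {f | ∃ c : K, #{α | f α ≠ c} < ℵ₀ ⊔ κ}
  add_mem' := by
    rintro f g ⟨c, hc⟩ ⟨d, hd⟩
    refine ⟨c + d, lt_of_le_of_lt (Cardinal.mk_le_mk_of_subset (?_ :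
      {α | (f + g) α ≠ c + d} ⊆ {α | f α ≠ c} ∪ {α | g α ≠ d})) ?_⟩
    · intro α hα
      simp only [Set.mem_union, Set.mem_setOf_eq]
      by_contra hn
      push_neg at hn
      exact hα (by simp [hn.1, hn.2])
    · exact lt_of_le_of_lt (Cardinal.mk_union_le _ _)
        (Cardinal.add_lt_of_lt le_sup_left hc hd)
  zero_mem' := by
    refine ⟨0, ?_⟩
    have : {α | (0 : ι → K) α ≠ 0} = ∅ := by ext α; simp
    rw [this]
    simpa using lt_of_lt_of_le Cardinal.aleph0_pos le_sup_left
  smul_mem' := by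
    rintro r f ⟨c, hc⟩
    refine ⟨r * c, lt_of_le_of_lt (Cardinal.mk_le_mk_of_subset (?_ :
      {α | (r • f) α ≠ r * c} ⊆ {α | f α ≠ c})) hc⟩
    intro α hα
    by_contra hn
    simp only [Set.mem_setOf_eq, not_not] at hn
    exact hα (by simp [hn])

variable {ι : Type u} {κ : Cardinal.{u}}

/-- The star-like set: elements of `Vsub` having at least one zero coordinate. -/
def FA (K : Type u) [Field K] (ι : Type u) (κ : Cardinal.{u}) : Set (Vsub K ι κ) :=
  {x | ∃ α : ι, (x : ι → K) α = 0}

lemma onesA_mem : (fun _ : ι => (1 : K)) ∈ Vsub K ι κ := by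
  refine ⟨1, ?_⟩
  have : {α : ι | (1 : K) ≠ 1} = ∅ := by ext α; simp
  rw [this]
  simpa using lt_of_lt_of_le Cardinal.aleph0_pos le_sup_left

lemma rangeA_lt (h2 : 2 ≤ κ) (hrange : ℵ₀ ≤ κ ∨ #ι < κ) (f : Vsub K ι κ) :
    #(Set.range (f : ι → K)) < κ := by
  rcases hrange with hκinf | hι
  · obtain ⟨c, hc⟩ := f.2
    rw [sup_eq_right.2 hκinf] at hc
    have hsub : Set.range (f : ι → K) ⊆
        insert c ((f : ι → K) '' {α | (f : ι → K) α ≠ c}) := by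
      rintro _ ⟨α, rfl⟩
      by_cases h : (f : ι → K) α = c
      · rw [h]; exact Set.mem_insert _ _
      · exact Set.mem_insert_iff.2 (Or.inr ⟨α, h, rfl⟩)
    calc #(Set.range (f : ι → K))
        ≤ #((insert c ((f : ι → K) '' {α | (f : ι → K) α ≠ c}) : Set K)) :=
          Cardinal.mk_le_mk_of_subset hsub
      _ ≤ #((f : ι → K) '' {α | (f : ι → K) α ≠ c}) + 1 := Cardinal.mk_insert_le
      _ ≤ #{α | (f : ι → K) α ≠ c} + 1 := by
          exact add_le_add Cardinal.mk_image_le le_rfl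
      _ < κ := Cardinal.add_lt_of_lt hκinf hc
          (lt_of_lt_of_le one_lt_two h2)
  · exact lt_of_le_of_lt Cardinal.mk_range_le hι

lemma hiA (hcard : ∀ μ : Cardinal.{u}, μ < κ → μ ≤ #ι) :
    ∀ S : Set (Vsub K ι κ), #S < κ →
      ∃ w : Vsub K ι κ, ∀ s ∈ S, w + s ∈ FA K ι κ := by
  classical
  intro S hS
  obtain ⟨g⟩ : Nonempty (S ↪ ι) := by
    rw [← Cardinal.le_def]
    exact hcard _ hS
  let w0 : ι → K := Function.extend g (fun s : S => -((s : Vsub K ι κ) : ι → K) (g s)) 0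
  have hw0 : w0 ∈ Vsub K ι κ := by
    refine ⟨0, lt_of_le_of_lt (Cardinal.mk_le_mk_of_subset
      (?_ : {α | w0 α ≠ 0} ⊆ Set.range g)) (lt_of_lt_of_le (lt_of_le_of_lt
        Cardinal.mk_range_le hS) le_sup_right)⟩
    intro α hα
    by_contra hn
    exact hα (Function.extend_apply' _ _ _ hn)
  refine ⟨⟨w0, hw0⟩, ?_⟩
  intro s hs
  refine ⟨g ⟨s, hs⟩, ?_⟩
  have hval : w0 (g ⟨s, hs⟩) = -((s : ι → K) (g ⟨s, hs⟩)) :=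
    g.injective.extend_apply _ _ ⟨s, hs⟩
  show ((⟨w0, hw0⟩ : Vsub K ι κ) + s : Vsub K ι κ).1 (g ⟨s, hs⟩) = 0
  rw [Submodule.coe_add]
  simp only [Pi.add_apply, hval]
  ring

lemma hiiA [Nonempty ι] (h2 : 2 ≤ κ) (hrange : ℵ₀ ≤ κ ∨ #ι < κ) (hκK : κ ≤ #K) :
    ∃ S0 : Set (Vsub K ι κ), #S0 = κ ∧
      ∀ w : Vsub K ι κ, ∃ s ∈ S0, w + s ∉ FA K ι κ := by
  classical
  obtain ⟨B, hB⟩ := Cardinal.le_mk_iff_exists_set.1 hκK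
  have hconstmem : ∀ b : K, (fun _ : ι => -b) ∈ Vsub K ι κ := by
    intro b
    refine ⟨-b, ?_⟩
    have : {α : ι | (-b : K) ≠ -b} = ∅ := by ext α; simp
    rw [this]
    simpa using lt_of_lt_of_le Cardinal.aleph0_pos le_sup_left
  let t : B → Vsub K ι κ := fun b => ⟨fun _ => -b.1, hconstmem b.1⟩
  have htinj : Function.Injective t := by
    intro a b hab
    have := congrFun (congrArg Subtype.val hab) (Classical.arbitrary ι)
    exact Subtype.val_injective (neg_injective this)
  refine ⟨Set.range t, by rw [Cardinal.mk_range_eq t htinj, hB], ?_⟩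
  intro w
  have hrw : #(Set.range (w : ι → K)) < κ := rangeA_lt h2 hrange w
  have : ∃ b ∈ B, b ∉ Set.range (w : ι → K) := by
    by_contra hn
    push_neg at hn
    have hsubB : B ⊆ Set.range (w : ι → K) := hn
    have hcontra : κ ≤ #(Set.range (w : ι → K)) :=
      hB.symm.trans_le (Cardinal.mk_le_mk_of_subset hsubB)
    exact absurd hcontra (not_le.2 hrw)
  obtain ⟨b, hbB, hb⟩ := this
  refine ⟨t ⟨b, hbB⟩, ⟨⟨b, hbB⟩, rfl⟩, ?_⟩
  rintro ⟨α, hα⟩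
  rw [Submodule.coe_add] at hα
  simp only [Pi.add_apply] at hα
  have : (w : ι → K) α = b := by
    have : (w : ι → K) α + -b = 0 := hα
    linear_combination this
  exact hb ⟨α, this⟩

end ConstructionA
section ConstructionB

variable (K : Type u) [Field K] (ι : Type u) [Infinite ι]

/-- The distinguished vector for construction B. -/
noncomputable def vB : ι →₀ K := Finsupp.single (Classical.arbitrary ι) (1 : K)

/-- The complement of the punctured line through `vB`. -/
def FB : Set (ι →₀ K) := {x | ∀ c : K, c ≠ 0 → x ≠ c • vB K ι}

lemma vB_apply : vB K ι (Classical.arbitrary ι) = 1 := Finsupp.single_eq_same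

lemma h0B : (0 : ι →₀ K) ∈ FB K ι := by
  intro c hc h
  apply hc
  have := congrArg (fun x : ι →₀ K => x (Classical.arbitrary ι)) h
  simpa [vB_apply] using this.symm

lemma hinvB : ∀ c : K, c ≠ 0 → ∀ x ∈ FB K ι, c • x ∈ FB K ι := by
  intro c hc x hx c' hc' h
  apply hx (c⁻¹ * c') (mul_ne_zero (inv_ne_zero hc) hc')
  rw [mul_smul, ← h, inv_smul_smul₀ hc]

lemma badB_not_mem : vB K ι ∉ FB K ι := fun h => h 1 one_ne_zero (one_smul K _).symm

lemma hφkerB :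
    (LinearMap.ker (Finsupp.lapply (M := K) (R := K) (Classical.arbitrary ι)) :
      Set (ι →₀ K)) ⊆ FB K ι := by
  intro x hx c hc h
  apply hc
  have hx' : x (Classical.arbitrary ι) = 0 := hx
  rw [h] at hx'
  simpa [vB_apply] using hx'

lemma hφB_surj :
    Function.Surjective (Finsupp.lapply (M := K) (R := K) (Classical.arbitrary ι)) := by
  intro k
  exact ⟨Finsupp.single (Classical.arbitrary ι) k, Finsupp.single_eq_same⟩

lemma hiB [Infinite K] {κ : Cardinal.{u}} (hKκ : #K < κ) (hικ : #ι = κ) :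
    ∀ S : Set (ι →₀ K), #S < κ → ∃ w : ι →₀ K, ∀ s ∈ S, w + s ∈ FB K ι := by
  intro S hS
  have hκinf : ℵ₀ ≤ κ := (Cardinal.infinite_iff.1 ‹Infinite K›).trans hKκ.le
  rcases Set.eq_empty_or_nonempty S with rfl | hne
  · exact ⟨0, by simp⟩
  haveI : Nonempty ↥S := hne.to_subtype
  set A : Set (ι →₀ K) := ⋃ s : S, Set.range (fun c : K => c • vB K ι - (s : ι →₀ K)) with hA
  have hAcard : #A < κ := by
    have h1 : #A ≤ #S * ⨆ s : S, #(Set.range (fun c : K => c • vB K ι - (s : ι →₀ K))) :=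
      Cardinal.mk_iUnion_le _
    have h2 : (⨆ s : S, #(Set.range (fun c : K => c • vB K ι - (s : ι →₀ K)))) ≤ #K :=
      ciSup_le' fun s => Cardinal.mk_range_le
    exact lt_of_le_of_lt (h1.trans (mul_le_mul_right h2 _))
      (Cardinal.mul_lt_of_lt hκinf hS hKκ)
  have hw : ∃ w : ι →₀ K, w ∉ A := by
    by_contra hn
    push_neg at hn
    have huniv : A = Set.univ := Set.eq_univ_of_forall hn
    have hκle : κ ≤ #(ι →₀ K) := by
      rw [← hικ]
      exact Cardinal.mk_le_of_injective (Finsupp.single_left_injective one_ne_zero)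
    rw [huniv, Cardinal.mk_univ] at hAcard
    exact absurd hκle (not_le.2 hAcard)
  obtain ⟨w, hwA⟩ := hw
  refine ⟨w, fun s hs c hc heq => ?_⟩
  exact hwA (Set.mem_iUnion.2 ⟨⟨s, hs⟩, ⟨c, (eq_sub_of_add_eq heq).symm⟩⟩)

lemma hiiB [Infinite K] {κ : Cardinal.{u}} (hKκ : #K < κ) (hικ : #ι = κ) :
    ∃ S0 : Set (ι →₀ K), #S0 = κ ∧ ∀ w : ι →₀ K, ∃ s ∈ S0, w + s ∉ FB K ι := by
  have hcard : #(ι →₀ K) = κ := by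
    rw [Cardinal.mk_finsupp_of_infinite, hικ]
    exact sup_eq_left.2 (hικ ▸ hKκ.le)
  refine ⟨Set.range (fun w : ι →₀ K => vB K ι - w), ?_, ?_⟩
  · rw [Cardinal.mk_range_eq _ sub_right_injective, hcard]
  · intro w
    refine ⟨vB K ι - w, ⟨w, rfl⟩, fun hmem => ?_⟩
    exact hmem 1 one_ne_zero (by rw [one_smul]; abel)

end ConstructionB

section Cases

variable {K W : Type u} [Field K] [Infinite K] [AddCommGroup W] [Module K W]

omit [Field K] [AddCommGroup W] [Module K W] in
lemma hK_aleph0 : ℵ₀ ≤ #K := Cardinal.infinite_iff.1 ‹Infinite K›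

lemma caseA (hdim : 2 ^ #K ≤ Module.rank K W)
    (κ : Cardinal.{u}) (h2 : 2 ≤ κ) (hκW : κ ≤ #W)
    (ι : Type u) [Nonempty ι] (hcard : ∀ μ : Cardinal.{u}, μ < κ → μ ≤ #ι)
    (hrange : ℵ₀ ≤ κ ∨ #ι < κ) (hκK : κ ≤ #K) (hιK : #ι ≤ #K) :
    ∃ F : Set W, F ≠ Set.univ ∧ (0 : W) ∈ F ∧ StarLike K F ∧
      addNum F = κ ∧ mL K F = Module.rank K W ∧
      linNum K F = Order.succ (Module.rank K W) := by
  have hKinf : ℵ₀ ≤ #K := hK_aleph0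
  have hrankinf : ℵ₀ ≤ Module.rank K W :=
    (hKinf.trans (Cardinal.cantor (#K)).le).trans hdim
  have hrankV : Module.rank K (Vsub K ι κ) ≤ Module.rank K W := by
    calc Module.rank K (Vsub K ι κ) ≤ Module.rank K (ι → K) := (Vsub K ι κ).rank_le
      _ ≤ #(ι → K) := rank_le_card K (ι → K)
      _ = #K ^ #ι := by rw [Cardinal.mk_arrow, Cardinal.lift_id, Cardinal.lift_id]
      _ ≤ #K ^ #K := Cardinal.power_le_power_left (Cardinal.mk_ne_zero K) hιK
      _ = 2 ^ #K := Cardinal.power_self_eq hKinf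
      _ ≤ Module.rank K W := hdim
  obtain ⟨q, hqsurj, hqker⟩ := exists_good_quotient hrankinf hrankV
  set α₀ := Classical.arbitrary ι
  have h0A : (0 : Vsub K ι κ) ∈ FA K ι κ := ⟨α₀, rfl⟩
  have hinvA : ∀ c : K, c ≠ 0 → ∀ x ∈ FA K ι κ, c • x ∈ FA K ι κ := by
    rintro c - x ⟨α, hα⟩
    refine ⟨α, ?_⟩
    show (c • (x : ι → K)) α = 0
    rw [Pi.smul_apply, hα, smul_zero]
  set onesV : Vsub K ι κ := ⟨fun _ => (1 : K), onesA_mem⟩ with honesV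
  set φA : Vsub K ι κ →ₗ[K] K := (LinearMap.proj α₀).comp (Vsub K ι κ).subtype with hφA
  have hφAsurj : Function.Surjective φA := by
    intro k
    refine ⟨k • onesV, ?_⟩
    show ((k • onesV : Vsub K ι κ) : ι → K) α₀ = k
    rw [Submodule.coe_smul]
    simp [honesV]
  have hφAker : (LinearMap.ker φA : Set (Vsub K ι κ)) ⊆ FA K ι κ := by
    intro x hx
    exact ⟨α₀, hx⟩
  have hbadA : onesV ∉ FA K ι κ := by
    rintro ⟨α, hα⟩
    exact one_ne_zero hα
  exact main_reduction q hqsurj hqker (FA K ι κ) h0A hinvA φA hφAsurj hφAker onesV hbadA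
    κ hκW (hiA hcard) (hiiA h2 hrange hκK)

lemma caseB (hdim : 2 ^ #K ≤ Module.rank K W)
    (κ : Cardinal.{u}) (hκW : κ ≤ #W) (hκrank : κ ≤ Module.rank K W) (hKκ : #K < κ) :
    ∃ F : Set W, F ≠ Set.univ ∧ (0 : W) ∈ F ∧ StarLike K F ∧
      addNum F = κ ∧ mL K F = Module.rank K W ∧
      linNum K F = Order.succ (Module.rank K W) := by
  have hKinf : ℵ₀ ≤ #K := hK_aleph0
  have hrankinf : ℵ₀ ≤ Module.rank K W :=
    (hKinf.trans (Cardinal.cantor (#K)).le).trans hdim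
  set ι := Quotient.out κ with hι
  have hικ : #ι = κ := Cardinal.mk_out κ
  haveI : Infinite ι := Cardinal.infinite_iff.2 (hικ ▸ (hKinf.trans hKκ.le))
  have hrankV : Module.rank K (ι →₀ K) ≤ Module.rank K W := by
    rw [rank_finsupp_self', hικ]
    exact hκrank
  obtain ⟨q, hqsurj, hqker⟩ := exists_good_quotient hrankinf hrankV
  exact main_reduction q hqsurj hqker (FB K ι) (h0B K ι) (hinvB K ι)
    (Finsupp.lapply (Classical.arbitrary ι)) (hφB_surj K ι) (hφkerB K ι)
    (vB K ι) (badB_not_mem K ι) κ hκW (hiB K ι hKκ hικ) (hiiB K ι hKκ hικ)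

end Cases
theorem stmt10 {K W : Type u} [Field K] [Infinite K] [AddCommGroup W] [Module K W]
    (hdim : 2 ^ #K ≤ Module.rank K W)
    (κ : Cardinal.{u}) (h2 : 2 ≤ κ) (hκ : κ ≤ #W) :
    ∃ F : Set W, F ≠ Set.univ ∧ (0 : W) ∈ F ∧ StarLike K F ∧
      addNum F = κ ∧ mL K F = Module.rank K W ∧
      linNum K F = Order.succ (Module.rank K W) := by
  have hKinf : ℵ₀ ≤ #K := Cardinal.infinite_iff.1 ‹Infinite K›
  have hKrank : #K ≤ Module.rank K W := (Cardinal.cantor (#K)).le.trans hdim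
  have hrankinf : ℵ₀ ≤ Module.rank K W := hKinf.trans hKrank
  by_cases hκK : κ ≤ #K
  · by_cases hκfin : ℵ₀ ≤ κ
    · -- infinite κ ≤ #K
      set ι := Quotient.out κ with hι
      have hικ : #ι = κ := Cardinal.mk_out κ
      haveI : Nonempty ι := by
        rw [← Cardinal.mk_ne_zero_iff, hικ]
        exact ne_of_gt (lt_of_lt_of_le two_pos h2)
      exact caseA hdim κ h2 hκ ι (fun μ hμ => hμ.le.trans_eq hικ.symm)
        (Or.inl hκfin) hκK (hικ.le.trans hκK)
    · -- finite κ
      obtain ⟨n, rfl⟩ := Cardinal.lt_aleph0.1 (not_le.1 hκfin)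
      have hn2 : 2 ≤ n := by exact_mod_cast h2
      set ι := ULift.{u} (Fin (n - 1)) with hι
      have hικ : #ι = ((n - 1 : ℕ) : Cardinal.{u}) := by
        simp [hι, Cardinal.mk_uLift, Cardinal.mk_fin]
      haveI : Nonempty ι := ⟨⟨⟨0, by omega⟩⟩⟩
      refine caseA hdim _ h2 hκ ι ?_ (Or.inr ?_) hκK (hικ.le.trans ?_)
      · intro μ hμ
        have hμfin : μ < ℵ₀ := hμ.trans (Cardinal.nat_lt_aleph0 n)
        obtain ⟨m, rfl⟩ := Cardinal.lt_aleph0.1 hμfin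
        have hmn : m < n := by exact_mod_cast hμ
        rw [hικ]
        exact_mod_cast Nat.le_sub_one_of_lt hmn
      · rw [hικ]
        exact_mod_cast Nat.sub_lt (by omega) one_pos
      · exact (Nat.cast_le.2 (Nat.sub_le n 1)).trans hκK
  · -- #K < κ
    have hKκ : #K < κ := not_le.1 hκK
    have hcardW : #W = Module.rank K W := by
      let BW := Module.Basis.ofVectorSpace K W
      have hW : #(Module.Basis.ofVectorSpaceIndex K W) = Module.rank K W := BW.mk_eq_rank''
      haveI : Infinite (Module.Basis.ofVectorSpaceIndex K W) :=
        Cardinal.infinite_iff.2 (hW ▸ hrankinf)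
      calc #W = #(Module.Basis.ofVectorSpaceIndex K W →₀ K) := BW.repr.toEquiv.cardinal_eq
        _ = #(Module.Basis.ofVectorSpaceIndex K W) ⊔ #K := Cardinal.mk_finsupp_of_infinite _ _
        _ = Module.rank K W := by rw [hW]; exact sup_eq_left.2 hKrank
    exact caseB hdim κ hκ (hκ.trans_eq hcardW) hKκ
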